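/- Let l, m ≥ 1 be integers and let σ be an involution of {1,…,l+m} without fixed points. If ζ ∈ Q_{σ,l} satisfies Im(Σ_{k=1}^{l} ζ_k) > 0 and Re(ζ_{l+m}) < Re(ζ_l), then ζ defines a suitable polygon, i.e. the two broken lines L1(ζ) and L2(ζ) intersect only at their two common endpoints 0 and Σ_{k=1}^{l} ζ_k. -/

import Mathlib

open Finset

/-- Extend a tuple `ζ : Fin n → ℂ` to `ℕ → ℂ` by zero. -/
noncomputable def pad {n : ℕ} (ζ : Fin n → ℂ) : ℕ → ℂ :=
  fun k => if h : k < n then ζ ⟨k, h⟩ else 0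

/-- The set `Q_{σ,l}` of suspension data. -/
def suspensionSet (l m : ℕ) (σ : Fin (l + m) → Fin (l + m)) : Set (Fin (l + m) → ℂ) :=
  {ζ | (∀ i, ζ i = ζ (σ i)) ∧
       (∀ i, 0 < (ζ i).re) ∧
       (∀ i : ℕ, 1 ≤ i → i ≤ l - 1 → 0 < (∑ k ∈ Finset.range i, pad ζ k).im) ∧
       (∀ j : ℕ, 1 ≤ j → j ≤ m - 1 → (∑ k ∈ Finset.range j, pad ζ (l + k)).im < 0) ∧
       (∑ k ∈ Finset.range l, pad ζ k) = (∑ k ∈ Finset.range m, pad ζ (l + k))}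

/-- The top broken line `L1(ζ)`: the union of the segments `[p_{i-1}, p_i]`,
where `p_i = ζ_1 + ⋯ + ζ_i`. -/
noncomputable def brokenLine1 (l m : ℕ) (ζ : Fin (l + m) → ℂ) : Set ℂ :=
  ⋃ i : Fin l,
    segment ℝ (∑ k ∈ Finset.range i.val, pad ζ k) (∑ k ∈ Finset.range (i.val + 1), pad ζ k)

/-- The bottom broken line `L2(ζ)`: the union of the segments `[q_{j-1}, q_j]`,
where `q_j = ζ_{l+1} + ⋯ + ζ_{l+j}`. -/
noncomputable def brokenLine2 (l m : ℕ) (ζ : Fin (l + m) → ℂ) : Set ℂ :=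
  ⋃ j : Fin m,
    segment ℝ (∑ k ∈ Finset.range j.val, pad ζ (l + k))
      (∑ k ∈ Finset.range (j.val + 1), pad ζ (l + k))

/-- `ζ` defines a suitable polygon: the two broken lines intersect only at their two
common endpoints. -/
def definesSuitablePolygon (l m : ℕ) (ζ : Fin (l + m) → ℂ) : Prop :=
  brokenLine1 l m ζ ∩ brokenLine2 l m ζ = {0, ∑ k ∈ Finset.range l, pad ζ k}

/-- If `ζ ∈ Q_{σ,l}` satisfies `Im(ζ_1 + ⋯ + ζ_l) > 0` and `Re(ζ_{l+m}) < Re(ζ_l)`, then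
`ζ` defines a suitable polygon. (The `1`-based indices `l` and `l+m` correspond to the
`Fin` indices `l-1` and `l+m-1`.) -/
lemma seg_mem_iff {a b z : ℂ} :
    z ∈ segment ℝ a b ↔ ∃ t : ℝ, 0 ≤ t ∧ t ≤ 1 ∧ z = (1 - t) • a + t • b := by
  rw [segment_eq_image]
  constructor
  · rintro ⟨t, ⟨h0, h1⟩, rfl⟩; exact ⟨t, h0, h1, rfl⟩
  · rintro ⟨t, h0, h1, rfl⟩; exact ⟨t, ⟨h0, h1⟩, rfl⟩

set_option maxHeartbeats 1000000 in
theorem suitable_of_im_pos_of_re_lt (l m : ℕ) (hl : 1 ≤ l) (hm : 1 ≤ m)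
    (σ : Fin (l + m) → Fin (l + m)) (hinv : ∀ i, σ (σ i) = i) (hfix : ∀ i, σ i ≠ i)
    (ζ : Fin (l + m) → ℂ) (hζ : ζ ∈ suspensionSet l m σ)
    (him : 0 < (∑ k ∈ Finset.range l, pad ζ k).im)
    (hre : (pad ζ (l + m - 1)).re < (pad ζ (l - 1)).re) :
    definesSuitablePolygon l m ζ := by
  obtain ⟨-, hpos, him1, him2, hsum⟩ := hζ
  clear hinv hfix
  have hpadre : ∀ k, k < l + m → 0 < (pad ζ k).re := by
    intro k hk; simpa [pad, hk] using hpos ⟨k, hk⟩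
  have hsucc : ∀ (f : ℕ → ℂ) (n : ℕ), 1 ≤ n →
      ∑ k ∈ Finset.range n, f k = (∑ k ∈ Finset.range (n - 1), f k) + f (n - 1) := by
    intro f n hn
    obtain ⟨p, rfl⟩ : ∃ p, n = p + 1 := ⟨n - 1, by omega⟩
    simp [Finset.sum_range_succ]
  -- strict monotonicity of real parts along partial sums
  have hPre : ∀ i j : ℕ, i < j → j ≤ l →
      (∑ k ∈ Finset.range i, pad ζ k).re < (∑ k ∈ Finset.range j, pad ζ k).re := by
    intro i j hij hjl
    have hsplit : ∑ k ∈ Finset.range j, pad ζ k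
        = (∑ k ∈ Finset.range i, pad ζ k) + ∑ k ∈ Finset.Ico i j, pad ζ k := by
      rw [Finset.range_eq_Ico,
        ← Finset.sum_Ico_consecutive _ (Nat.zero_le i) (le_of_lt hij)]
      rw [Finset.range_eq_Ico]
    have hpos' : 0 < (∑ k ∈ Finset.Ico i j, pad ζ k).re := by
      rw [Complex.re_sum]
      refine Finset.sum_pos (fun k hk => hpadre k ?_) (Finset.nonempty_Ico.mpr hij)
      have := (Finset.mem_Ico.mp hk).2; omega
    rw [hsplit, Complex.add_re]; linarith
  have hQre : ∀ i j : ℕ, i < j → j ≤ m →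
      (∑ k ∈ Finset.range i, pad ζ (l + k)).re < (∑ k ∈ Finset.range j, pad ζ (l + k)).re := by
    intro i j hij hjl
    have hsplit : ∑ k ∈ Finset.range j, pad ζ (l + k)
        = (∑ k ∈ Finset.range i, pad ζ (l + k)) + ∑ k ∈ Finset.Ico i j, pad ζ (l + k) := by
      rw [Finset.range_eq_Ico,
        ← Finset.sum_Ico_consecutive _ (Nat.zero_le i) (le_of_lt hij)]
      rw [Finset.range_eq_Ico]
    have hpos' : 0 < (∑ k ∈ Finset.Ico i j, pad ζ (l + k)).re := by
      rw [Complex.re_sum]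
      refine Finset.sum_pos (fun k hk => hpadre (l + k) ?_) (Finset.nonempty_Ico.mpr hij)
      have := (Finset.mem_Ico.mp hk).2; omega
    rw [hsplit, Complex.add_re]; linarith
  -- top vertices have positive imaginary part
  have hPim : ∀ i : ℕ, 1 ≤ i → i ≤ l → 0 < (∑ k ∈ Finset.range i, pad ζ k).im := by
    intro i h1 h2
    rcases eq_or_lt_of_le h2 with rfl | h
    · exact him
    · exact him1 i h1 (by omega)
  -- Lemma A : points of L1 have nonneg im; im = 0 only at the origin
  have hA : ∀ z ∈ brokenLine1 l m ζ, 0 ≤ z.im ∧ (z.im = 0 → z = 0) := by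
    intro z hz
    rw [brokenLine1, Set.mem_iUnion] at hz
    obtain ⟨i, hzi⟩ := hz
    rw [seg_mem_iff] at hzi
    obtain ⟨t, ht0, ht1, rfl⟩ := hzi
    have hiA : 0 ≤ (∑ k ∈ Finset.range i.val, pad ζ k).im := by
      rcases Nat.eq_zero_or_pos i.val with h0 | h0
      · simp [h0]
      · exact le_of_lt (hPim i.val h0 (le_of_lt i.isLt))
    have hiB : 0 < (∑ k ∈ Finset.range (i.val + 1), pad ζ k).im :=
      hPim _ (by omega) i.isLt
    have himz : ((1 - t) • (∑ k ∈ Finset.range i.val, pad ζ k)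
        + t • (∑ k ∈ Finset.range (i.val + 1), pad ζ k)).im
        = (1 - t) * (∑ k ∈ Finset.range i.val, pad ζ k).im
          + t * (∑ k ∈ Finset.range (i.val + 1), pad ζ k).im := by
      simp only [Complex.add_im, Complex.smul_im, smul_eq_mul]
    constructor
    · rw [himz]
      have := mul_nonneg (by linarith : (0:ℝ) ≤ 1 - t) hiA
      have := mul_nonneg ht0 (le_of_lt hiB)
      linarith
    · intro h0
      rw [himz] at h0
      have h1 : 0 ≤ (1 - t) * (∑ k ∈ Finset.range i.val, pad ζ k).im :=
        mul_nonneg (by linarith) hiA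
      have h2 : 0 ≤ t * (∑ k ∈ Finset.range (i.val + 1), pad ζ k).im :=
        mul_nonneg ht0 (le_of_lt hiB)
      have ht : t = 0 := by nlinarith
      subst ht
      have hAim : (∑ k ∈ Finset.range i.val, pad ζ k).im = 0 := by nlinarith
      have hi0 : i.val = 0 := by
        by_contra hne
        have := hPim i.val (by omega) (le_of_lt i.isLt)
        linarith
      simp [hi0]
  -- m ≥ 2
  have hm2 : 2 ≤ m := by
    by_contra h
    have hm1 : m = 1 := by omega
    subst hm1
    have h1 : (pad ζ l).re = (∑ k ∈ Finset.range l, pad ζ k).re := by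
      rw [hsum]; simp
    have h2 : (pad ζ (l - 1)).re ≤ (∑ k ∈ Finset.range l, pad ζ k).re := by
      rw [Complex.re_sum]
      refine Finset.single_le_sum (f := fun k => (pad ζ k).re)
        (fun k hk => le_of_lt (hpadre k ?_)) (Finset.mem_range.mpr (by omega))
      have := Finset.mem_range.mp hk; omega
    have hll : l + 1 - 1 = l := by omega
    rw [hll] at hre
    linarith
  -- names for distinguished points
  set E : ℂ := ∑ k ∈ Finset.range l, pad ζ k with hE
  set A1 : ℂ := ∑ k ∈ Finset.range (l - 1), pad ζ k with hA1def
  set B1 : ℂ := ∑ k ∈ Finset.range (m - 1), pad ζ (l + k) with hB1def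
  set v : ℂ := pad ζ (l - 1) with hvdef
  set w : ℂ := pad ζ (l + (m - 1)) with hwdef
  have hEA : E = A1 + v := by
    rw [hE, hA1def, hvdef]; exact hsucc _ l hl
  have hEB : E = B1 + w := by
    rw [hsum, hB1def, hwdef]; exact hsucc _ m hm
  have hre' : w.re < v.re := by
    have hh : l + (m - 1) = l + m - 1 := by omega
    rw [hvdef, hwdef, hh]; exact hre
  have hvre : 0 < v.re := hpadre _ (by omega)
  have hwre : 0 < w.re := hpadre _ (by omega)
  have hB1im : B1.im < 0 := him2 (m - 1) (by omega) le_rfl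
  have hB1re_lt : A1.re < B1.re := by
    have h1 : E.re = A1.re + v.re := by rw [hEA]; simp
    have h2 : E.re = B1.re + w.re := by rw [hEB]; simp
    linarith
  have hB1E : B1.re < E.re := by
    have h2 : E.re = B1.re + w.re := by rw [hEB]; simp
    linarith
  -- the last top segment is contained in L1
  have hseg1 : segment ℝ A1 E ⊆ brokenLine1 l m ζ := by
    intro x hx
    rw [brokenLine1, Set.mem_iUnion]
    refine ⟨⟨l - 1, by omega⟩, ?_⟩
    show x ∈ segment ℝ (∑ k ∈ Finset.range (l - 1), pad ζ k)
      (∑ k ∈ Finset.range (l - 1 + 1), pad ζ k)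
    have hll : l - 1 + 1 = l := by omega
    rw [hll, ← hE, ← hA1def]; exact hx
  -- the last bottom segment is contained in L2
  have hseg2 : segment ℝ B1 E ⊆ brokenLine2 l m ζ := by
    intro x hx
    rw [brokenLine2, Set.mem_iUnion]
    refine ⟨⟨m - 1, by omega⟩, ?_⟩
    show x ∈ segment ℝ (∑ k ∈ Finset.range (m - 1), pad ζ (l + k))
      (∑ k ∈ Finset.range (m - 1 + 1), pad ζ (l + k))
    have hmm : m - 1 + 1 = m := by omega
    rw [hmm, ← hsum, ← hB1def]; exact hx
  rw [definesSuitablePolygon, ← hE]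
  apply Set.eq_of_subset_of_subset
  · -- forward inclusion
    rintro z ⟨hz1, hz2⟩
    simp only [Set.mem_insert_iff, Set.mem_singleton_iff]
    obtain ⟨hzim, hz0⟩ := hA z hz1
    rw [brokenLine2, Set.mem_iUnion] at hz2
    obtain ⟨j, hzj⟩ := hz2
    rw [seg_mem_iff] at hzj
    obtain ⟨t, ht0, ht1, hzeq⟩ := hzj
    by_cases hj : j.val = m - 1
    · -- last bottom segment
      rw [hj] at hzeq
      have hmm : m - 1 + 1 = m := by omega
      rw [hmm, ← hsum, ← hB1def] at hzeq
      -- z = (1-t) • B1 + t • E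
      have hzre : B1.re ≤ z.re := by
        have hz : z.re = (1 - t) * B1.re + t * E.re := by
          rw [hzeq]; simp only [Complex.add_re, Complex.smul_re, smul_eq_mul]
        nlinarith
      -- z lies on the last top segment
      rw [brokenLine1, Set.mem_iUnion] at hz1
      obtain ⟨i, hzi⟩ := hz1
      rw [seg_mem_iff] at hzi
      obtain ⟨u, hu0, hu1, hzeq'⟩ := hzi
      have hil : i.val = l - 1 := by
        by_contra hne
        have hi1 : i.val + 1 ≤ l - 1 := by have := i.isLt; omega
        have hle1 : (∑ k ∈ Finset.range i.val, pad ζ k).re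
            ≤ (∑ k ∈ Finset.range (i.val + 1), pad ζ k).re :=
          le_of_lt (hPre _ _ (by omega) (by omega))
        have hle2 : (∑ k ∈ Finset.range (i.val + 1), pad ζ k).re ≤ A1.re := by
          rcases eq_or_lt_of_le hi1 with heq | hlt
          · rw [hA1def, ← heq]
          · exact le_of_lt (hPre _ _ hlt (by omega))
        have hzle : z.re ≤ (∑ k ∈ Finset.range (i.val + 1), pad ζ k).re := by
          have hz : z.re = (1 - u) * (∑ k ∈ Finset.range i.val, pad ζ k).re
              + u * (∑ k ∈ Finset.range (i.val + 1), pad ζ k).re := by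
            rw [hzeq']; simp only [Complex.add_re, Complex.smul_re, smul_eq_mul]
          nlinarith
        linarith
      rw [hil] at hzeq'
      have hll : l - 1 + 1 = l := by omega
      rw [hll, ← hE, ← hA1def] at hzeq'
      -- now z = (1-u) • A1 + u • E  and  z = (1-t) • B1 + t • E
      have key : ((1 - t : ℝ) : ℂ) * w = ((1 - u : ℝ) : ℂ) * v := by
        have heq : (1 - t) • B1 + t • E = (1 - u) • A1 + u • E := by
          rw [← hzeq, ← hzeq']
        have hB1' : B1 = E - w := by rw [hEB]; ring
        have hA1' : A1 = E - v := by rw [hEA]; ring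
        rw [hB1', hA1'] at heq
        simp only [Complex.real_smul] at heq
        push_cast at heq ⊢
        linear_combination -heq
      rcases eq_or_lt_of_le ht1 with ht1' | ht1'
      · -- t = 1 : z = E
        right
        rw [ht1'] at hzeq
        rw [hzeq]
        simp
      · -- t < 1 leads to contradiction
        exfalso
        set s : ℝ := 1 - t with hsdef
        set r : ℝ := 1 - u with hrdef
        have hs0 : 0 < s := by rw [hsdef]; linarith
        have hsne' : s ≠ 0 := ne_of_gt hs0
        have hr0' : 0 ≤ r := by rw [hrdef]; linarith
        have keyre : s * w.re = r * v.re := by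
          have := congrArg Complex.re key
          simpa [Complex.mul_re] using this
        have hr0 : 0 < r := by nlinarith
        have hrs : r < s := by nlinarith
        set ρ : ℝ := r / s with hρdef
        have hρ0 : 0 < ρ := div_pos hr0 hs0
        have hρ1 : ρ < 1 := by rw [hρdef, div_lt_one hs0]; exact hrs
        have hsne : ((s : ℝ) : ℂ) ≠ 0 := by exact_mod_cast hsne'
        have key2 : w = (ρ : ℂ) * v := by
          have hsr : (s : ℝ) * ρ = r := by rw [hρdef]; field_simp
          have h1 : (s : ℂ) * w = (s : ℂ) * ((ρ : ℂ) * v) := by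
            calc (s : ℂ) * w = (r : ℂ) * v := key
            _ = (s : ℂ) * ((ρ : ℂ) * v) := by rw [← hsr]; push_cast; ring
          exact mul_left_cancel₀ hsne h1
        have hB1mem : B1 ∈ segment ℝ A1 E := by
          rw [seg_mem_iff]
          refine ⟨1 - ρ, by linarith, by linarith, ?_⟩
          have hB1' : B1 = E - w := by rw [hEB]; ring
          have hA1' : A1 = E - v := by rw [hEA]; ring
          rw [hB1', hA1', key2]
          simp only [Complex.real_smul]
          push_cast
          ring
        have := (hA B1 (hseg1 hB1mem)).1
        linarith
    · -- not the last bottom segment : im z ≤ 0, hence z = 0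
      left
      apply hz0
      have hj1 : j.val + 1 ≤ m - 1 := by have := j.isLt; omega
      have hQa : (∑ k ∈ Finset.range j.val, pad ζ (l + k)).im ≤ 0 := by
        rcases Nat.eq_zero_or_pos j.val with h0 | h0
        · simp [h0]
        · exact le_of_lt (him2 j.val h0 (by omega))
      have hQb : (∑ k ∈ Finset.range (j.val + 1), pad ζ (l + k)).im ≤ 0 :=
        le_of_lt (him2 _ (by omega) hj1)
      have hzim' : z.im ≤ 0 := by
        have hz : z.im = (1 - t) * (∑ k ∈ Finset.range j.val, pad ζ (l + k)).im
            + t * (∑ k ∈ Finset.range (j.val + 1), pad ζ (l + k)).im := by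
          rw [hzeq]; simp only [Complex.add_im, Complex.smul_im, smul_eq_mul]
        nlinarith
      linarith
  · -- reverse inclusion
    rintro z (rfl | rfl)
    · constructor
      · rw [brokenLine1, Set.mem_iUnion]
        refine ⟨⟨0, by omega⟩, ?_⟩
        have h0 := left_mem_segment ℝ (∑ k ∈ Finset.range (0 : ℕ), pad ζ k)
          (∑ k ∈ Finset.range (0 + 1 : ℕ), pad ζ k)
        simpa using h0
      · rw [brokenLine2, Set.mem_iUnion]
        refine ⟨⟨0, by omega⟩, ?_⟩
        have h0 := left_mem_segment ℝ (∑ k ∈ Finset.range (0 : ℕ), pad ζ (l + k))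
          (∑ k ∈ Finset.range (0 + 1 : ℕ), pad ζ (l + k))
        simpa using h0
    · exact ⟨hseg1 (right_mem_segment ℝ A1 E), hseg2 (right_mem_segment ℝ B1 E)⟩
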